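/- arXiv:2005.13320 — 2 statements merged into one kernel-verified Lean document; each statement's English description precedes it below -/
import Mathlib

section
/- Let G be an isometric daisy graph of a Hamming graph H = H_{k_1,…,k_n} with respect to 0^n, where H is the smallest possible such Hamming graph. For every j ∈ {1,…,n} and every i ∈ {0,…,k_j−1}, the subgraph of G induced by W_i^j is (isomorphic, via deleting the j-th coordinate, to) a daisy graph of the Hamming graph H' = H_{k_1,…,k_{j-1},k_{j+1},…,k_n} with respect to 0^{n-1}. -/
open SimpleGraph

namespace Daisy

variable {V : Type*}

/-- The interval `I_G(u,v)`: vertices lying on shortest `u,v`-paths. -/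
def interval (G : SimpleGraph V) (u v : V) : Set V :=
  {x | G.dist u x + G.dist x v = G.dist u v}

/-- The vertex set of the daisy graph of `G` with respect to the root `r`, generated by `X`. -/
def daisySet (G : SimpleGraph V) (r : V) (X : Set V) : Set V :=
  ⋃ v ∈ X, interval G r v

/-- The subgraph of `G` induced by `S` is an isometric subgraph of `G`. -/
def IsIsometricSubset (G : SimpleGraph V) (S : Set V) : Prop :=
  ∀ u v : S, (G.induce S).dist u v = G.dist u.1 v.1

/-- Some shortest `u,v`-path of `G` contains both `x` and `y`. -/
def OnShortestPath (G : SimpleGraph V) (u v x y : V) : Prop :=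
  ∃ p : G.Walk u v, p.length = G.dist u v ∧ x ∈ p.support ∧ y ∈ p.support

/-- Conditions 1 and 2 of the definition of a pseudo-median `(x,y,z)` of the triple `(u,v,w)`. -/
def PseudoMedianConds (G : SimpleGraph V) (u v w x y z : V) : Prop :=
  OnShortestPath G u v x y ∧ OnShortestPath G v w y z ∧ OnShortestPath G u w x z ∧
  G.dist x y = G.dist y z ∧ G.dist y z = G.dist x z

/-- `(x,y,z)` is a pseudo-median of the triple `(u,v,w)` in `G`:
it satisfies the path and equidistance conditions, and `d(x,y)` is minimal under them. -/
def IsPseudoMedian (G : SimpleGraph V) (u v w x y z : V) : Prop :=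
  PseudoMedianConds G u v w x y z ∧
  ∀ x' y' z' : V, PseudoMedianConds G u v w x' y' z' → G.dist x y ≤ G.dist x' y'

/-- The triple `(u,v,w)` has a pseudo-median of size `s` in `G`. -/
def HasPseudoMedianOfSize (G : SimpleGraph V) (u v w : V) (s : ℕ) : Prop :=
  ∃ x y z : V, IsPseudoMedian G u v w x y z ∧ G.dist x y = s

/-- The Hamming graph with factors `K_{k i}`: vertices are tuples, two vertices being
adjacent iff they differ in exactly one coordinate. -/
def hammingGraph {ι : Type*} (k : ι → ℕ) : SimpleGraph (∀ i, Fin (k i)) where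
  Adj u v := ∃! i, u i ≠ v i
  symm := by
    constructor
    rintro u v ⟨i, hi, hu⟩
    exact ⟨i, Ne.symm hi, fun j hj => hu j (Ne.symm hj)⟩
  loopless := by
    constructor
    rintro u ⟨i, hi, -⟩
    exact hi rfl

/-- The all-zeros vertex `0^n` of a Hamming graph. -/
def hroot {ι : Type*} (k : ι → ℕ) (hk : ∀ i, 0 < k i) : ∀ i, Fin (k i) :=
  fun i => ⟨0, hk i⟩

/-- `S` is the vertex set of a daisy graph of `G` with respect to the root `r`. -/
def IsDaisySet (G : SimpleGraph V) (r : V) (S : Set V) : Prop :=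
  ∃ X : Set V, S = daisySet G r X

/-- `G` is (isomorphic to) an isometric daisy graph of `H` with respect to the root `r`. -/
def IsIsometricDaisyGraphOf {U : Type*} (G : SimpleGraph U) (H : SimpleGraph V) (r : V) : Prop :=
  ∃ S : Set V, IsDaisySet H r S ∧ IsIsometricSubset H S ∧ Nonempty (G ≃g H.induce S)

/-- `G` is not an isometric daisy graph (w.r.t. the all-zeros root) of any Hamming graph
with fewer vertices than `hammingGraph k`. -/
def SmallestSuch {U : Type*} (G : SimpleGraph U) {n : ℕ} (k : Fin n → ℕ) : Prop :=
  ∀ (m : ℕ) (k' : Fin m → ℕ) (hk' : ∀ i, 0 < k' i),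
    Fintype.card (∀ i, Fin (k' i)) < Fintype.card (∀ i, Fin (k i)) →
    ¬ IsIsometricDaisyGraphOf G (hammingGraph k') (hroot k' hk')

variable {ι : Type*} [Fintype ι] [DecidableEq ι] {k : ι → ℕ}

lemma hg_adj_iff {u v : ∀ i, Fin (k i)} :
    (hammingGraph k).Adj u v ↔ hammingDist u v = 1 := by
  constructor
  · rintro ⟨l, hl, hu⟩
    rw [hammingDist, Finset.card_eq_one]
    refine ⟨l, Finset.eq_singleton_iff_unique_mem.2 ⟨by simp [hl], fun x hx => hu x (by simpa using hx)⟩⟩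
  · intro h
    rw [hammingDist, Finset.card_eq_one] at h
    obtain ⟨a, ha⟩ := h
    have hamem : a ∈ Finset.univ.filter fun i => u i ≠ v i := ha ▸ Finset.mem_singleton_self a
    refine ⟨a, by simpa using hamem, fun x hx => ?_⟩
    have : x ∈ Finset.univ.filter fun i => u i ≠ v i := by simpa using hx
    rw [ha] at this
    simpa using this

lemma hg_le_length {u v : ∀ i, Fin (k i)} (p : (hammingGraph k).Walk u v) :
    hammingDist u v ≤ p.length := by
  induction p with
  | nil => simp
  | @cons a b c h q ih =>
    have h1 : hammingDist a b = 1 := hg_adj_iff.1 h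
    calc hammingDist a c ≤ hammingDist a b + hammingDist b c := hammingDist_triangle a b c
      _ ≤ 1 + q.length := by omega
      _ = (SimpleGraph.Walk.cons h q).length := by simp [Nat.add_comm]

lemma hg_exists_walk (u v : ∀ i, Fin (k i)) :
    ∃ p : (hammingGraph k).Walk u v, p.length = hammingDist u v := by
  suffices H : ∀ (m : ℕ) (u : ∀ i, Fin (k i)), hammingDist u v = m →
      ∃ p : (hammingGraph k).Walk u v, p.length = m by
    exact H _ u rfl
  intro m
  induction m with
  | zero =>
    intro u hu
    obtain rfl : u = v := hammingDist_eq_zero.1 hu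
    exact ⟨.nil, rfl⟩
  | succ m ih =>
    intro u hu
    have hne : (Finset.univ.filter fun l => u l ≠ v l).Nonempty := by
      rw [← Finset.card_pos, ← hammingDist]; omega
    obtain ⟨l, hl⟩ := hne
    have hl' : u l ≠ v l := by simpa using hl
    set u' := Function.update u l (v l) with hu'
    have hadj : (hammingGraph k).Adj u u' := by
      refine ⟨l, by simp [hu', hl'], fun x hx => ?_⟩
      by_contra hxl
      exact hx (by simp [hu', Function.update_of_ne hxl])
    have hdist : hammingDist u' v = m := by
      have hfilter : (Finset.univ.filter fun x => u' x ≠ v x)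
          = (Finset.univ.filter fun x => u x ≠ v x).erase l := by
        ext x
        by_cases hx : x = l <;> simp [hx, hu', Function.update_of_ne]
      have := Finset.card_erase_of_mem hl
      rw [hammingDist, hfilter, this, ← hammingDist, hu]
      omega
    obtain ⟨q, hq⟩ := ih u' hdist
    exact ⟨.cons hadj q, by simp [hq]⟩

lemma hg_dist_eq (u v : ∀ i, Fin (k i)) :
    (hammingGraph k).dist u v = hammingDist u v := by
  obtain ⟨p, hp⟩ := hg_exists_walk u v
  refine le_antisymm (hp ▸ SimpleGraph.dist_le p) ?_
  obtain ⟨q, hq⟩ := (SimpleGraph.Reachable.exists_walk_length_eq_dist ⟨p⟩)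
  exact hq ▸ hg_le_length q

lemma hg_mem_interval_iff {r x v : ∀ i, Fin (k i)} :
    x ∈ interval (hammingGraph k) r v ↔ ∀ l, x l = r l ∨ x l = v l := by
  simp only [interval, Set.mem_setOf_eq, hg_dist_eq]
  set A := Finset.univ.filter fun l => r l ≠ x l with hA
  set B := Finset.univ.filter fun l => x l ≠ v l with hB
  set C := Finset.univ.filter fun l => r l ≠ v l with hC
  have hdA : hammingDist r x = A.card := rfl
  have hdB : hammingDist x v = B.card := rfl
  have hdC : hammingDist r v = C.card := rfl
  have hCsub : C ⊆ A ∪ B := by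
    intro l hl
    simp only [hA, hB, hC, Finset.mem_union, Finset.mem_filter, Finset.mem_univ, true_and] at *
    by_contra hcon
    push_neg at hcon
    exact hl (hcon.1.trans hcon.2)
  rw [hdA, hdB, hdC]
  constructor
  · intro h l
    by_contra hcon
    push_neg at hcon
    have hmem : l ∈ A ∩ B := by
      simp [hA, hB, Ne.symm hcon.1, hcon.2]
    have h1 : C.card ≤ (A ∪ B).card := Finset.card_le_card hCsub
    have h2 : 1 ≤ (A ∩ B).card := Finset.card_pos.2 ⟨l, hmem⟩
    have h3 := Finset.card_union_add_card_inter A B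
    omega
  · intro h
    have hdisj : Disjoint A B := by
      rw [Finset.disjoint_left]
      intro l hlA hlB
      simp only [hA, hB, Finset.mem_filter, Finset.mem_univ, true_and] at hlA hlB
      rcases h l with h' | h'
      · exact hlA h'.symm
      · exact hlB h'
    have hunion : A ∪ B = C := by
      refine Finset.Subset.antisymm ?_ hCsub
      intro l hl
      simp only [hA, hB, hC, Finset.mem_union, Finset.mem_filter, Finset.mem_univ, true_and] at *
      rcases hl with h' | h'
      · rcases h l with h'' | h''
        · exact absurd h''.symm h'
        · rw [← h'']; exact h'
      · rcases h l with h'' | h''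
        · rw [h''] at h'; exact h'
        · exact absurd h'' h'
    rw [← Finset.card_union_of_disjoint hdisj, hunion]


def extFun (k : ι → ℕ) (j : ι) (i : Fin (k j)) (y : ∀ l : {l : ι // l ≠ j}, Fin (k l.1)) :
    ∀ l, Fin (k l) :=
  fun l => if h : l = j then Fin.cast (congrArg k h).symm i else y ⟨l, h⟩

lemma extFun_self (k : ι → ℕ) (j : ι) (i : Fin (k j)) (y : ∀ l : {l : ι // l ≠ j}, Fin (k l.1)) :
    extFun k j i y j = i := by
  simp [extFun]

lemma extFun_ne (k : ι → ℕ) (j : ι) (i : Fin (k j)) (y : ∀ l : {l : ι // l ≠ j}, Fin (k l.1))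
    {l : ι} (h : l ≠ j) : extFun k j i y l = y ⟨l, h⟩ := by
  simp [extFun, h]

/-- Let `G` (with vertex set `S`) be an isometric daisy graph of a Hamming
graph w.r.t. `0^n`, smallest possible. For every `j` and `i`, the subgraph of `G` induced by
`W_i^j` is, via deleting the `j`-th coordinate, (isomorphic to) a daisy graph of the Hamming
graph on the remaining factors with respect to `0^{n-1}`. -/


theorem W_induces_daisy_graph
    (n : ℕ) (k : Fin n → ℕ) (hk : ∀ i, 0 < k i)
    (S : Set (∀ i, Fin (k i)))
    (hdaisy : IsDaisySet (hammingGraph k) (hroot k hk) S)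
    (hisom : IsIsometricSubset (hammingGraph k) S)
    (hmin : SmallestSuch ((hammingGraph k).induce S) k)
    (j : Fin n) (i : Fin (k j)) :
    IsDaisySet (hammingGraph (fun l : {l : Fin n // l ≠ j} => k l.1))
        (fun l : {l : Fin n // l ≠ j} => (⟨0, hk l.1⟩ : Fin (k l.1)))
        ((fun (u : ∀ i, Fin (k i)) (l : {l : Fin n // l ≠ j}) => u l.1) ''
          {u ∈ S | u j = i}) ∧
      ∃ φ : ((hammingGraph k).induce {u ∈ S | u j = i}) ≃g
          ((hammingGraph (fun l : {l : Fin n // l ≠ j} => k l.1)).induce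
            ((fun (u : ∀ i, Fin (k i)) (l : {l : Fin n // l ≠ j}) => u l.1) ''
              {u ∈ S | u j = i})),
        ∀ x, (φ x).1 = fun l : {l : Fin n // l ≠ j} => x.1 l.1 := by
  classical
  obtain ⟨X₀, hS⟩ := hdaisy
  set W : Set (∀ i, Fin (k i)) := {u ∈ S | u j = i} with hW
  set proj : (∀ i, Fin (k i)) → (∀ l : {l : Fin n // l ≠ j}, Fin (k l.1)) :=
    fun u l => u l.1 with hproj
  set T := proj '' W with hT
  set r' : ∀ l : {l : Fin n // l ≠ j}, Fin (k l.1) :=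
    fun l => (⟨0, hk l.1⟩ : Fin (k l.1)) with hr'
  have hroot_eq : ∀ l, hroot k hk l = ⟨0, hk l⟩ := fun l => rfl
  -- key: closure of T under intervals from the root
  have hTdaisy : T = daisySet (hammingGraph (fun l : {l : Fin n // l ≠ j} => k l.1)) r' T := by
    apply Set.Subset.antisymm
    · intro y hy
      exact Set.mem_biUnion hy (hg_mem_interval_iff.2 fun l => Or.inr rfl)
    · intro y hy
      simp only [daisySet, Set.mem_iUnion] at hy
      obtain ⟨v, hv, hyv⟩ := hy
      obtain ⟨u, ⟨huS, huj⟩, rfl⟩ := hv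
      rw [hS] at huS
      simp only [daisySet, Set.mem_iUnion] at huS
      obtain ⟨w, hwX, huw⟩ := huS
      set u' := extFun k j i y with hu'
      have hu'w : u' ∈ interval (hammingGraph k) (hroot k hk) w := by
        rw [hg_mem_interval_iff] at huw ⊢
        intro l
        by_cases hl : l = j
        · subst hl
          rw [hu', extFun_self, ← huj]
          exact huw l
        · rw [hu', extFun_ne k j i y hl]
          rcases hg_mem_interval_iff.1 hyv ⟨l, hl⟩ with h' | h'
          · left; exact h'
          · rw [h']
            exact huw l
      have hu'S : u' ∈ S := by
        rw [hS]
        exact Set.mem_biUnion hwX hu'w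
      refine ⟨u', ⟨hu'S, extFun_self k j i y⟩, ?_⟩
      funext l
      exact extFun_ne k j i y l.2
  refine ⟨⟨T, hTdaisy⟩, ?_⟩
  -- the isomorphism
  have hWmem : ∀ x : W, x.1 j = i := fun x => x.2.2
  refine ⟨⟨⟨fun x => ⟨proj x.1, ⟨x.1, x.2, rfl⟩⟩,
    fun y => ⟨extFun k j i y.1, ?_⟩, ?_, ?_⟩, ?_⟩, fun x => rfl⟩
  · -- invFun lands in W
    obtain ⟨u, hu, hpu⟩ := y.2
    have : extFun k j i y.1 = u := by
      funext l
      by_cases hl : l = j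
      · subst hl
        rw [extFun_self, hu.2]
      · rw [extFun_ne k j i y.1 hl, ← hpu]
    rw [this]
    exact hu
  · -- left inverse
    intro x
    apply Subtype.ext
    show extFun k j i (proj x.1) = x.1
    funext l
    by_cases hl : l = j
    · subst hl
      rw [extFun_self]
      exact (hWmem x).symm
    · exact extFun_ne k j i (proj x.1) hl
  · -- right inverse
    intro y
    apply Subtype.ext
    show proj (extFun k j i y.1) = y.1
    funext l
    exact extFun_ne k j i y.1 l.2
  · -- map_rel_iff
    intro a b
    show (hammingGraph fun l : {l : Fin n // l ≠ j} => k l.1).Adj (proj a.1) (proj b.1) ↔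
      (hammingGraph k).Adj a.1 b.1
    have haj : a.1 j = b.1 j := (hWmem a).trans (hWmem b).symm
    constructor
    · rintro ⟨l, hl, hu⟩
      refine ⟨l.1, hl, fun m hm => ?_⟩
      have hmj : m ≠ j := fun h => hm (h ▸ haj)
      exact congrArg Subtype.val (hu ⟨m, hmj⟩ hm)
    · rintro ⟨l, hl, hu⟩
      have hlj : l ≠ j := fun h => hl (h ▸ haj)
      exact ⟨⟨l, hlj⟩, hl, fun m hm => Subtype.ext (hu m.1 hm)⟩


end Daisy
end

section
/- Let H = H_{k_1,…,k_n} be a Hamming graph with root 0^n and let G = H_{0^n}({x}) be the daisy graph of H with respect to 0^n generated by a single vertex x = x_1…x_n. Then G is isomorphic to the daisy cube Q_n({y_1…y_n}), where y_i = min{x_i, 1} for each i ∈ {1,…,n}. -/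
open SimpleGraph

namespace Daisy

variable {V : Type*}

set_option linter.unusedSectionVars false

section Aux

variable {ι : Type*} [Fintype ι] [DecidableEq ι] {k : ι → ℕ}

/-- Hamming distance as a sum of indicators. -/
def hd (u v : ∀ i, Fin (k i)) : ℕ := ∑ i, if u i ≠ v i then 1 else 0

lemma hd_self (u : ∀ i, Fin (k i)) : hd u u = 0 := by simp [hd]

lemma hd_triangle (u v w : ∀ i, Fin (k i)) : hd u w ≤ hd u v + hd v w := by
  rw [hd, hd, hd, ← Finset.sum_add_distrib]
  refine Finset.sum_le_sum fun i _ => ?_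
  by_cases h1 : u i = v i <;> by_cases h2 : v i = w i <;> by_cases h3 : u i = w i <;> simp_all

lemma adj_hd {u v : ∀ i, Fin (k i)} (h : (hammingGraph k).Adj u v) : hd u v = 1 := by
  obtain ⟨i, hi, hu⟩ := h
  rw [hd, Finset.sum_eq_single i]
  · simp [hi]
  · intro j _ hj
    simp only [ite_eq_right_iff]
    intro h'; exact absurd (hu j h') hj
  · simp

lemma exists_walk (u v : ∀ i, Fin (k i)) :
    ∃ p : (hammingGraph k).Walk u v, p.length = hd u v := by
  generalize hn : hd u v = m
  induction m generalizing u with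
  | zero =>
    have : u = v := by
      funext i
      by_contra hi
      have h1 : 1 ≤ hd u v := by
        rw [hd]
        have := Finset.single_le_sum (f := fun j => if u j ≠ v j then 1 else 0)
          (fun j _ => Nat.zero_le _) (Finset.mem_univ i)
        simpa [hi] using this
      omega
    subst this; exact ⟨Walk.nil, rfl⟩
  | succ m ih =>
    have hpos : 0 < hd u v := by omega
    have hex : ∃ i, u i ≠ v i := by
      by_contra hc
      push_neg at hc
      have : u = v := funext hc
      subst this; rw [hd_self] at hpos; omega
    obtain ⟨i, hi⟩ := hex
    set u' := Function.update u i (v i) with hu'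
    have hui : u' i = v i := by rw [hu', Function.update_self]
    have hadj : (hammingGraph k).Adj u u' := by
      refine ⟨i, ?_, ?_⟩
      · show u i ≠ u' i
        rw [hui]; exact hi
      · intro j hj
        by_contra hji
        rw [hu', Function.update_of_ne hji] at hj
        exact hj rfl
    have hstep : hd u' v = m := by
      have h1 : hd u v = (if u i ≠ v i then 1 else 0) + ∑ j ∈ Finset.univ.erase i, (if u j ≠ v j then 1 else 0) := by
        rw [hd, ← Finset.add_sum_erase _ _ (Finset.mem_univ i)]
      have h2 : hd u' v = (if u' i ≠ v i then 1 else 0) + ∑ j ∈ Finset.univ.erase i, (if u' j ≠ v j then 1 else 0) := by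
        rw [hd, ← Finset.add_sum_erase _ _ (Finset.mem_univ i)]
      have h3 : ∀ j ∈ Finset.univ.erase i, (if u' j ≠ v j then 1 else 0) = (if u j ≠ v j then 1 else 0) := by
        intro j hj
        rw [hu', Function.update_of_ne (Finset.ne_of_mem_erase hj)]
      rw [Finset.sum_congr rfl h3] at h2
      rw [if_neg (not_not_intro hui)] at h2
      rw [if_pos hi] at h1
      omega
    obtain ⟨p, hp⟩ := ih u' hstep
    exact ⟨Walk.cons hadj p, by simp [hp]⟩

lemma hd_le_length {u v : ∀ i, Fin (k i)} (p : (hammingGraph k).Walk u v) :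
    hd u v ≤ p.length := by
  induction p with
  | nil => simp [hd_self]
  | @cons a b c h p ih =>
    calc hd a c ≤ hd a b + hd b c := hd_triangle a b c
    _ ≤ 1 + p.length := by have := adj_hd h; omega
    _ = (Walk.cons h p).length := by simp [Nat.add_comm]

lemma dist_eq_hd (u v : ∀ i, Fin (k i)) : (hammingGraph k).dist u v = hd u v := by
  obtain ⟨p, hp⟩ := exists_walk u v
  refine le_antisymm (hp ▸ SimpleGraph.dist_le p) ?_
  have hr : (hammingGraph k).Reachable u v := ⟨p⟩
  obtain ⟨q, hq⟩ := hr.exists_walk_length_eq_dist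
  rw [← hq]; exact hd_le_length q

lemma mem_interval_iff (r x z : ∀ i, Fin (k i)) :
    z ∈ interval (hammingGraph k) r x ↔ ∀ i, z i = r i ∨ z i = x i := by
  have point : ∀ i, ((if r i ≠ x i then (1:ℕ) else 0) =
      (if r i ≠ z i then 1 else 0) + if z i ≠ x i then 1 else 0) ↔ (z i = r i ∨ z i = x i) := by
    intro i
    by_cases h1 : r i = z i <;> by_cases h2 : z i = x i <;> by_cases h3 : r i = x i <;>
      simp_all [eq_comm]
  have hle : ∀ i ∈ Finset.univ, (if r i ≠ x i then (1:ℕ) else 0) ≤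
      (if r i ≠ z i then 1 else 0) + if z i ≠ x i then 1 else 0 := by
    intro i _
    by_cases h1 : r i = z i <;> by_cases h2 : z i = x i <;> by_cases h3 : r i = x i <;>
      simp_all
  simp only [interval, Set.mem_setOf_eq, dist_eq_hd]
  rw [hd, hd, hd, ← Finset.sum_add_distrib, eq_comm,
    Finset.sum_eq_sum_iff_of_le hle]
  constructor
  · intro h i
    exact (point i).1 (h i (Finset.mem_univ i))
  · intro h i _
    exact (point i).2 (h i)

lemma mem_daisy_singleton (r x z : ∀ i, Fin (k i)) :
    z ∈ daisySet (hammingGraph k) r {x} ↔ ∀ i, z i = r i ∨ z i = x i := by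
  simp [daisySet, mem_interval_iff]

end Aux

/-- Let `H = H_{k_1,…,k_n}` be a Hamming graph with root `0^n` and let
`G = H_{0^n}({x})` be the daisy graph of `H` generated by a single vertex `x`. Then `G` is
isomorphic to the daisy cube `Q_n({y})`, where `y i = min (x i) 1`. -/
theorem daisy_singleton_iso_daisyCube
    (n : ℕ) (k : Fin n → ℕ) (hk : ∀ i, 0 < k i) (x : ∀ i, Fin (k i)) :
    Nonempty
      (((hammingGraph k).induce
          (daisySet (hammingGraph k) (hroot k hk) {x})) ≃g
        ((hammingGraph (fun _ : Fin n => 2)).induce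
          (daisySet (hammingGraph (fun _ : Fin n => 2))
            (hroot (fun _ : Fin n => 2) (fun _ => two_pos))
            {fun i => if x i = ⟨0, hk i⟩ then (0 : Fin 2) else 1}))) := by
  set x' : Fin n → Fin 2 := fun i => if x i = ⟨0, hk i⟩ then (0 : Fin 2) else 1 with hx'
  set S := daisySet (hammingGraph k) (hroot k hk) {x} with hSdef
  set S' := daisySet (hammingGraph (fun _ : Fin n => 2))
      (hroot (fun _ : Fin n => 2) (fun _ => two_pos)) {x'} with hS'def
  have hz0 : (hroot (fun _ : Fin n => 2) (fun _ => two_pos)) = fun _ => (0 : Fin 2) := by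
    funext i; rfl
  have hS : ∀ z, z ∈ S ↔ ∀ i, z i = ⟨0, hk i⟩ ∨ z i = x i := fun z =>
    mem_daisy_singleton _ _ _
  have hS' : ∀ w, w ∈ S' ↔ ∀ i, w i = 0 ∨ w i = x' i := fun w => by
    rw [hS'def, hz0]; exact mem_daisy_singleton _ _ _
  have fin2 : ∀ a : Fin 2, a = 0 ∨ a = 1 := by decide
  -- forward/backward maps
  have fwd : ∀ z : S, (fun i => if z.1 i = ⟨0, hk i⟩ then (0 : Fin 2) else 1) ∈ S' := by
    rintro ⟨z, hz⟩
    rw [hS']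
    intro i
    by_cases h : z i = ⟨0, hk i⟩
    · left; simp [h]
    · right
      have hxz : z i = x i := ((hS z).1 hz i).resolve_left h
      have hx0 : ¬ x i = ⟨0, hk i⟩ := fun hc => h (hxz.trans hc)
      simp [h, hx', hx0]
  have bwd : ∀ w : S', (fun i => if w.1 i = (0 : Fin 2) then (⟨0, hk i⟩ : Fin (k i)) else x i) ∈ S := by
    rintro ⟨w, hw⟩
    rw [hS]
    intro i
    by_cases h : w i = 0
    · left; simp [h]
    · right; simp [h]
  let e : S ≃ S' :=
    { toFun := fun z => ⟨_, fwd z⟩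
      invFun := fun w => ⟨_, bwd w⟩
      left_inv := by
        rintro ⟨z, hz⟩
        ext i
        simp only
        by_cases h : z i = ⟨0, hk i⟩
        · simp [h]
        · have hxz : z i = x i := ((hS z).1 hz i).resolve_left h
          have hx0 : ¬ x i = ⟨0, hk i⟩ := hxz ▸ h
          simp [h, hxz, hx0]
      right_inv := by
        rintro ⟨w, hw⟩
        ext i
        simp only
        by_cases h : w i = 0
        · simp [h]
        · have hxw : w i = x' i := ((hS' w).1 hw i).resolve_left h
          have hx0 : ¬ x i = ⟨0, hk i⟩ := by
            intro hc
            apply h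
            rw [hxw, hx']; simp [hc]
          simp [h, hx0, hxw, hx'] }
  -- coordinatewise adjacency transfer
  have key : ∀ (a b : S) (i : Fin n),
      (a.1 i ≠ b.1 i) ↔ ((e a).1 i ≠ (e b).1 i) := by
    rintro ⟨a, ha⟩ ⟨b, hb⟩ i
    show (a i ≠ b i) ↔
      ((if a i = ⟨0, hk i⟩ then (0:Fin 2) else 1) ≠ (if b i = ⟨0, hk i⟩ then (0:Fin 2) else 1))
    by_cases h1 : a i = ⟨0, hk i⟩ <;> by_cases h2 : b i = ⟨0, hk i⟩
    · simp [h1, h2]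
    · have hne : a i ≠ b i := fun hc => h2 (hc ▸ h1)
      simp [h1, h2, hne]
      exact fun hc => h2 hc.symm
    · have hne : a i ≠ b i := fun hc => h1 (hc.symm ▸ h2)
      simp [h1, h2, hne]
    · have hax : a i = x i := ((hS a).1 ha i).resolve_left h1
      have hbx : b i = x i := ((hS b).1 hb i).resolve_left h2
      simp [h1, h2, hax.trans hbx.symm]
  refine ⟨{ toEquiv := e, map_rel_iff' := ?_ }⟩
  intro a b
  show (hammingGraph fun _ => 2).Adj (e a).1 (e b).1 ↔ (hammingGraph k).Adj a.1 b.1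
  constructor
  · rintro ⟨i, hi, hu⟩
    exact ⟨i, (key a b i).2 hi, fun j hj => hu j ((key a b j).1 hj)⟩
  · rintro ⟨i, hi, hu⟩
    exact ⟨i, (key a b i).1 hi, fun j hj => hu j ((key a b j).2 hj)⟩


end Daisy
end
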